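/- Let D₁, D₂ ⊆ ℂ be domains convex in the direction of the real axis with D₁ ∩ D₂ = ∅, and let q : D₁ ∪ D₂ → ℂ be continuous with Im q(z) = Im z for all z. If q is locally injective on D₁ ∪ D₂ and P_y(q(D₁) ∩ q(D₂)) = ∅, then q is injective on D₁ ∪ D₂. -/

import Mathlib

open Complex Set Metric

/-- Projection of a planar set onto the imaginary axis. -/
def Py (D : Set ℂ) : Set ℝ := {a : ℝ | ∃ z ∈ D, z.im = a}

/-- `Λ_y(D)`: imaginary parts `a` such that the horizontal slice of `D` at height `a`
is nonempty and connected. -/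
def Ly (D : Set ℂ) : Set ℝ := {a : ℝ | IsConnected (D ∩ {z : ℂ | z.im = a})}

/-- Convexity in the direction of the real axis. -/
def CvxRe (D : Set ℂ) : Prop :=
  ∀ z ∈ D, ∀ w ∈ D, z.im = w.im → segment ℝ z w ⊆ D

/-- Local injectivity of `q` on `S`. -/
def LocInjOn (q : ℂ → ℂ) (S : Set ℂ) : Prop :=
  ∀ z ∈ S, ∃ U ∈ nhdsWithin z S, Set.InjOn q U

/-- A continuous function on a closed interval around `c` which attains its maximum at the
center `c` cannot be injective on that interval. -/
lemma no_max_aux (f : ℝ → ℝ) (c δ : ℝ) (hδ : 0 < δ)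
    (hcont : ContinuousOn f (Icc (c-δ) (c+δ)))
    (hmax : ∀ x ∈ Icc (c-δ) (c+δ), f x ≤ f c)
    (hinj : Set.InjOn f (Icc (c-δ) (c+δ))) : False := by
  have hlc : c - δ < c := by linarith
  have hcr : c < c + δ := by linarith
  have hcmem : c ∈ Icc (c-δ) (c+δ) := ⟨hlc.le, hcr.le⟩
  have hl : c - δ ∈ Icc (c-δ) (c+δ) := ⟨le_rfl, by linarith⟩
  have hr : c + δ ∈ Icc (c-δ) (c+δ) := ⟨by linarith, le_rfl⟩
  have hfl : f (c-δ) < f c := lt_of_le_of_ne (hmax _ hl)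
    (fun h => by have := hinj hl hcmem h; linarith)
  have hfr : f (c+δ) < f c := lt_of_le_of_ne (hmax _ hr)
    (fun h => by have := hinj hr hcmem h; linarith)
  set m := max (f (c-δ)) (f (c+δ)) with hm_def
  have hm : m < f c := max_lt hfl hfr
  set t1 := (m + f c)/2 with ht1_def
  have ht1lt : t1 < f c := by simp only [ht1_def]; linarith
  have h1 : t1 ∈ Icc (f (c-δ)) (f c) :=
    ⟨by have := le_max_left (f (c-δ)) (f (c+δ)); simp only [ht1_def]; linarith, ht1lt.le⟩
  have h2 : t1 ∈ Icc (f (c+δ)) (f c) :=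
    ⟨by have := le_max_right (f (c-δ)) (f (c+δ)); simp only [ht1_def]; linarith, ht1lt.le⟩
  obtain ⟨x, hx, hfx⟩ := intermediate_value_Icc hlc.le
    (hcont.mono (Icc_subset_Icc_right hcr.le)) h1
  obtain ⟨y, hy, hfy⟩ := intermediate_value_Icc' hcr.le
    (hcont.mono (Icc_subset_Icc_left hlc.le)) h2
  have hxy : x ≠ y := by
    rintro rfl
    have hxc : x = c := le_antisymm hx.2 hy.1
    rw [hxc] at hfx
    linarith
  exact hxy (hinj ⟨hx.1, hx.2.trans hcr.le⟩ ⟨hlc.le.trans hy.1, hy.2⟩ (hfx.trans hfy.symm))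

/-- A continuous function on `[a, b] ⊆ S` attaining its maximum over `[a, b]` at an interior
point `c` cannot be injective on any neighborhood of `c` within `S`. -/
lemma no_interior_max (S : Set ℝ) (f : ℝ → ℝ) (a b c : ℝ)
    (hIcc : Icc a b ⊆ S) (hc : c ∈ Ioo a b)
    (hcont : ContinuousOn f (Icc a b))
    (hmax : ∀ x ∈ Icc a b, f x ≤ f c)
    (hU : ∃ U ∈ nhdsWithin c S, Set.InjOn f U) : False := by
  obtain ⟨U, hU, hUinj⟩ := hU
  obtain ⟨t, hto, hct, hts⟩ := mem_nhdsWithin.1 hU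
  obtain ⟨ε, hε, hball⟩ := Metric.isOpen_iff.1 (hto.inter isOpen_Ioo) c ⟨hct, hc⟩
  have hsub : Icc (c - ε/2) (c + ε/2) ⊆ t ∩ Ioo a b := by
    refine subset_trans (fun x hx => ?_) hball
    rw [mem_ball, Real.dist_eq]
    have : |x - c| ≤ ε/2 := abs_le.2 ⟨by linarith [hx.1], by linarith [hx.2]⟩
    linarith
  have hsubI : Icc (c - ε/2) (c + ε/2) ⊆ Icc a b :=
    fun x hx => Ioo_subset_Icc_self (hsub hx).2
  have hsubU : Icc (c - ε/2) (c + ε/2) ⊆ U :=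
    fun x hx => hts ⟨(hsub hx).1, hIcc (hsubI hx)⟩
  exact no_max_aux f c (ε/2) (by linarith) (hcont.mono hsubI)
    (fun x hx => hmax x (hsubI hx)) (hUinj.mono hsubU)

/-- On an order-connected subset of `ℝ`, a continuous locally injective function takes
distinct values at distinct comparable points. -/
lemma key1D_aux (S : Set ℝ) (hS : S.OrdConnected) (f : ℝ → ℝ)
    (hcont : ContinuousOn f S)
    (hloc : ∀ x ∈ S, ∃ U ∈ nhdsWithin x S, Set.InjOn f U)
    (a b : ℝ) (ha : a ∈ S) (hb : b ∈ S) (hab : a < b) (hfe : f a = f b) : False := by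
  have hIcc : Icc a b ⊆ S := hS.out ha hb
  have hcont' : ContinuousOn f (Icc a b) := hcont.mono hIcc
  have hne : (Icc a b).Nonempty := ⟨a, left_mem_Icc.2 hab.le⟩
  obtain ⟨c, hcI, hcmax⟩ := isCompact_Icc.exists_isMaxOn hne hcont'
  obtain ⟨c', hc'I, hcmin⟩ := isCompact_Icc.exists_isMinOn hne hcont'
  have haI : a ∈ Icc a b := left_mem_Icc.2 hab.le
  have hbI : b ∈ Icc a b := right_mem_Icc.2 hab.le
  rcases lt_or_ge (f a) (f c) with hgt | hle
  · -- the maximum is attained at an interior point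
    have hca : c ≠ a := fun h => by rw [h] at hgt; exact lt_irrefl _ hgt
    have hcb : c ≠ b := fun h => by rw [h, ← hfe] at hgt; exact lt_irrefl _ hgt
    exact no_interior_max S f a b c hIcc
      ⟨lt_of_le_of_ne hcI.1 (Ne.symm hca), lt_of_le_of_ne hcI.2 hcb⟩
      hcont' (fun x hx => hcmax hx) (hloc c (hIcc hcI))
  · rcases lt_or_ge (f c') (f a) with hlt | hge
    · -- the minimum is attained at an interior point: apply the previous step to `-f`
      have hc'a : c' ≠ a := fun h => by rw [h] at hlt; exact lt_irrefl _ hlt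
      have hc'b : c' ≠ b := fun h => by rw [h, ← hfe] at hlt; exact lt_irrefl _ hlt
      obtain ⟨U, hU, hUinj⟩ := hloc c' (hIcc hc'I)
      exact no_interior_max S (-f) a b c' hIcc
        ⟨lt_of_le_of_ne hc'I.1 (Ne.symm hc'a), lt_of_le_of_ne hc'I.2 hc'b⟩
        hcont'.neg (fun x hx => neg_le_neg (hcmin hx))
        ⟨U, hU, fun x hx y hy h => hUinj hx hy (neg_injective h)⟩
    · -- `f` is constant on `[a, b]`
      have hconst : ∀ x ∈ Icc a b, f x = f a :=
        fun x hx => le_antisymm ((hcmax hx).trans hle) (hge.trans (hcmin hx))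
      obtain ⟨U, hU, hUinj⟩ := hloc a ha
      obtain ⟨t, hto, hat, hts⟩ := mem_nhdsWithin.1 hU
      obtain ⟨ε, hε, hball⟩ := Metric.isOpen_iff.1 hto a hat
      set e := min ε (b - a) with he_def
      have he : 0 < e := lt_min hε (by linarith)
      set x := a + e/2 with hx_def
      have hxI : x ∈ Icc a b := ⟨by simp only [hx_def]; linarith,
        by have : e ≤ b - a := min_le_right _ _; simp only [hx_def]; linarith⟩
      have hxU : x ∈ U := hts ⟨hball (by
        rw [mem_ball, Real.dist_eq]
        have h1 : e ≤ ε := min_le_left _ _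
        have h3 : x - a = e/2 := by rw [hx_def]; ring
        have h2 : |x - a| = e/2 := by rw [h3, _root_.abs_of_nonneg]; linarith
        linarith), hIcc hxI⟩
      have haU : a ∈ U := hts ⟨hat, ha⟩
      have : x = a := hUinj hxU haU ((hconst x hxI).trans (hconst a haI).symm)
      simp only [hx_def] at this; linarith

/-- The one-dimensional Clunie–Sheil-Small lemma: on an order-connected subset of `ℝ`,
a continuous locally injective function is injective. -/
lemma key1D (S : Set ℝ) (hS : S.OrdConnected) (f : ℝ → ℝ)
    (hcont : ContinuousOn f S)
    (hloc : ∀ x ∈ S, ∃ U ∈ nhdsWithin x S, Set.InjOn f U) :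
    Set.InjOn f S := by
  intro a ha b hb hfe
  rcases lt_trichotomy a b with h | h | h
  · exact absurd (key1D_aux S hS f hcont hloc a b ha hb h hfe) not_false
  · exact h
  · exact absurd (key1D_aux S hS f hcont hloc b a hb ha h hfe.symm) not_false

/-- The Clunie–Sheil-Small lemma: on a set convex in the direction of the real axis, a
continuous map preserving imaginary parts which is locally injective is injective. -/
lemma injOn_of_cvxRe (D E : Set ℂ) (hDE : D ⊆ E) (hD : CvxRe D)
    (q : ℂ → ℂ) (hq : ContinuousOn q E)
    (him : ∀ z ∈ E, (q z).im = z.im)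
    (hloc : LocInjOn q E) : Set.InjOn q D := by
  intro z hz w hw hqe
  have hzw : z.im = w.im := by
    rw [← him z (hDE hz), hqe, him w (hDE hw)]
  set a := z.im with ha_def
  set φ : ℝ → ℂ := fun x => ⟨x, a⟩ with hφ_def
  have hφcont : Continuous φ := by
    have h : φ = fun x : ℝ => (x : ℂ) + (a : ℂ) * I := by
      funext x; simp only [hφ_def]; exact Complex.mk_eq_add_mul_I x a
    rw [h]; continuity
  set S : Set ℝ := {x | φ x ∈ D} with hS_def
  have hSord : S.OrdConnected := by
    constructor
    intro x hx y hy u hu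
    rcases eq_or_lt_of_le hu.1 with rfl | hxu
    · exact hx
    have hxy : x < y := hxu.trans_le hu.2
    have hyx : y - x ≠ 0 := ne_of_gt (by linarith)
    have hseg := hD (φ x) hx (φ y) hy rfl
    apply hseg
    refine ⟨(y - u)/(y - x), (u - x)/(y - x),
      div_nonneg (by linarith [hu.2]) (by linarith),
      div_nonneg (by linarith) (by linarith), ?_, ?_⟩
    · rw [← add_div]
      have : y - u + (u - x) = y - x := by ring
      rw [this, div_self hyx]
    · apply Complex.ext
      · simp only [hφ_def, Complex.add_re, Complex.real_smul, Complex.mul_re,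
          Complex.ofReal_re, Complex.ofReal_im]
        field_simp
        ring
      · simp only [hφ_def, Complex.add_im, Complex.real_smul, Complex.mul_im,
          Complex.ofReal_re, Complex.ofReal_im]
        field_simp
        ring
  set f : ℝ → ℝ := fun x => (q (φ x)).re with hf_def
  have hmaps : MapsTo φ S E := fun x hx => hDE hx
  have hfcont : ContinuousOn f S :=
    Complex.continuous_re.comp_continuousOn (hq.comp hφcont.continuousOn hmaps)
  have hfloc : ∀ x ∈ S, ∃ U ∈ nhdsWithin x S, Set.InjOn f U := by
    intro x hx
    obtain ⟨U, hU, hUinj⟩ := hloc (φ x) (hDE hx)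
    have hUE : U ∩ E ∈ nhdsWithin (φ x) E := Filter.inter_mem hU self_mem_nhdsWithin
    have htend : Filter.Tendsto φ (nhdsWithin x S) (nhdsWithin (φ x) E) :=
      hφcont.continuousWithinAt.tendsto_nhdsWithin hmaps
    refine ⟨φ ⁻¹' (U ∩ E), htend hUE, ?_⟩
    intro x1 hx1 x2 hx2 hfx
    have h1 : q (φ x1) = q (φ x2) := by
      apply Complex.ext hfx
      rw [him _ hx1.2, him _ hx2.2]
    have h2 := hUinj hx1.1 hx2.1 h1
    have h3 : (φ x1).re = (φ x2).re := by rw [h2]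
    simpa [hφ_def] using h3
  have hfinj := key1D S hSord f hfcont hfloc
  have h1 : φ z.re = z := Complex.ext rfl rfl
  have h2 : φ w.re = w := Complex.ext rfl hzw
  have hzS : z.re ∈ S := by rw [hS_def, mem_setOf_eq, h1]; exact hz
  have hwS : w.re ∈ S := by rw [hS_def, mem_setOf_eq, h2]; exact hw
  have hre : z.re = w.re := by
    apply hfinj hzS hwS
    simp only [hf_def, h1, h2, hqe]
  exact Complex.ext hre hzw

theorem disjoint_domains_injective
    (D₁ D₂ : Set ℂ) (h₁o : IsOpen D₁) (h₁c : IsConnected D₁) (h₁x : CvxRe D₁)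
    (h₂o : IsOpen D₂) (h₂c : IsConnected D₂) (h₂x : CvxRe D₂)
    (hdisj : D₁ ∩ D₂ = ∅)
    (q : ℂ → ℂ) (hq : ContinuousOn q (D₁ ∪ D₂))
    (him : ∀ z ∈ D₁ ∪ D₂, (q z).im = z.im)
    (hloc : LocInjOn q (D₁ ∪ D₂))
    (hproj : Py (q '' D₁ ∩ q '' D₂) = ∅) :
    Set.InjOn q (D₁ ∪ D₂) := by
  have hinj₁ : Set.InjOn q D₁ :=
    injOn_of_cvxRe D₁ (D₁ ∪ D₂) subset_union_left h₁x q hq him hloc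
  have hinj₂ : Set.InjOn q D₂ :=
    injOn_of_cvxRe D₂ (D₁ ∪ D₂) subset_union_right h₂x q hq him hloc
  have hcross : ∀ z ∈ D₁, ∀ w ∈ D₂, q z ≠ q w := by
    intro z hz w hw hqe
    have : (q z).im ∈ Py (q '' D₁ ∩ q '' D₂) :=
      ⟨q z, ⟨⟨z, hz, rfl⟩, hqe ▸ ⟨w, hw, rfl⟩⟩, rfl⟩
    rw [hproj] at this
    exact this
  intro z hz w hw hqe
  rcases hz with hz | hz <;> rcases hw with hw | hw
  · exact hinj₁ hz hw hqe
  · exact absurd hqe (hcross z hz w hw)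
  · exact absurd hqe.symm (hcross w hw z hz)
  · exact hinj₂ hz hw hqe
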